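/- arXiv:1710.06011 — 2 statements merged into one kernel-verified Lean document; each statement's English description precedes it below -/
import Mathlib

section
/- For n ∈ ℤ define T_n = Σ_{i ∈ ℤ} E*_{i+n} T E*_i (with E*_i = 0 outside 0 ≤ i ≤ D). Then T = ⊕_{n ∈ ℤ} T_n is a direct sum of vector spaces, and T_n T_m ⊆ T_{n+m} for all n, m ∈ ℤ; that is, {T_n} is a ℤ-grading of T. -/
open Matrix BigOperators

noncomputable section

variable {X : Type*} [Fintype X] [DecidableEq X]

/-- The adjacency matrix of a graph, over ℂ. -/
def adjMat (G : SimpleGraph X) [DecidableRel G.Adj] : Matrix X X ℂ :=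
  Matrix.of fun y z => if G.Adj y z then 1 else 0

/-- The dual idempotent `E*_i`: diagonal 0-1 matrix projecting onto
vertices at distance `i` from `x` (zero for `i` outside the distance range). -/
def Estar (G : SimpleGraph X) (x : X) (i : ℤ) : Matrix X X ℂ :=
  Matrix.diagonal fun y => if (G.dist x y : ℤ) = i then 1 else 0

/-- The lowering matrix `L = Σ_{i=1}^D E*_{i-1} A E*_i`. -/
def lowerM (G : SimpleGraph X) [DecidableRel G.Adj] (x : X) (D : ℕ) : Matrix X X ℂ :=
  ∑ i ∈ Finset.Icc 1 D, Estar G x ((i : ℤ) - 1) * adjMat G * Estar G x i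

/-- The flat matrix `F = Σ_{i=0}^D E*_i A E*_i`. -/
def flatM (G : SimpleGraph X) [DecidableRel G.Adj] (x : X) (D : ℕ) : Matrix X X ℂ :=
  ∑ i ∈ Finset.range (D + 1), Estar G x i * adjMat G * Estar G x i

/-- The raising matrix `R = Σ_{i=0}^{D-1} E*_{i+1} A E*_i`. -/
def raiseM (G : SimpleGraph X) [DecidableRel G.Adj] (x : X) (D : ℕ) : Matrix X X ℂ :=
  ∑ i ∈ Finset.range D, Estar G x ((i : ℤ) + 1) * adjMat G * Estar G x i

/-- The subconstituent (Terwilliger) algebra `T`, generated by `A` and the `E*_i`. -/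
def Talg (G : SimpleGraph X) [DecidableRel G.Adj] (x : X) (D : ℕ) :
    Subalgebra ℂ (Matrix X X ℂ) :=
  Algebra.adjoin ℂ (insert (adjMat G) (Estar G x '' Set.Icc (0 : ℤ) (D : ℤ)))

/-- The quantum adjacency algebra `Q`, generated by `L, F, R`. -/
def Qalg (G : SimpleGraph X) [DecidableRel G.Adj] (x : X) (D : ℕ) :
    Subalgebra ℂ (Matrix X X ℂ) :=
  Algebra.adjoin ℂ {lowerM G x D, flatM G x D, raiseM G x D}

/-- The dual adjacency algebra `M*`, the span of the `E*_i`. -/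
def Mstar (G : SimpleGraph X) (x : X) (D : ℕ) : Submodule ℂ (Matrix X X ℂ) :=
  Submodule.span ℂ (Estar G x '' Set.Icc (0 : ℤ) (D : ℤ))

/-- The graded component `T_n = Σ_i E*_{i+n} T E*_i`. -/
def Tgraded (G : SimpleGraph X) [DecidableRel G.Adj] (x : X) (D : ℕ) (n : ℤ) :
    Submodule ℂ (Matrix X X ℂ) :=
  Submodule.span ℂ
    {M | ∃ i : ℤ, ∃ S ∈ Talg G x D, M = Estar G x (i + n) * S * Estar G x i}

/-- The graded component `Q_n = Q ∩ T_n`. -/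
def Qgraded (G : SimpleGraph X) [DecidableRel G.Adj] (x : X) (D : ℕ) (n : ℤ) :
    Submodule ℂ (Matrix X X ℂ) :=
  (Subalgebra.toSubmodule (Qalg G x D)) ⊓ Tgraded G x D n

/-- `W` is an irreducible module for the algebra `A₀ ⊆ Mat_X(ℂ)` (acting on `V = ℂ^X`
by matrix-vector multiplication). -/
def IsIrredMod (A₀ : Subalgebra ℂ (Matrix X X ℂ)) (W : Submodule ℂ (X → ℂ)) : Prop :=
  (∀ S ∈ A₀, ∀ w ∈ W, S.mulVec w ∈ W) ∧ W ≠ ⊥ ∧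
    ∀ W' : Submodule ℂ (X → ℂ), W' ≤ W →
      (∀ S ∈ A₀, ∀ w ∈ W', S.mulVec w ∈ W') → W' = ⊥ ∨ W' = W

/-- The subspace `E*_i W`. -/
def Emap (G : SimpleGraph X) (x : X) (i : ℤ) (W : Submodule ℂ (X → ℂ)) :
    Submodule ℂ (X → ℂ) :=
  W.map (Estar G x i).mulVecLin

/-- The subspace `P · W` spanned by all `S w`, `S ∈ P`, `w ∈ W`. -/
def actSp (P : Submodule ℂ (Matrix X X ℂ)) (W : Submodule ℂ (X → ℂ)) :
    Submodule ℂ (X → ℂ) :=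
  Submodule.span ℂ {v | ∃ S ∈ P, ∃ w ∈ W, v = S.mulVec w}

/-- The statement: `W` has endpoint `r` and diameter `d`, i.e. `E*_i W ≠ 0`
iff `r ≤ i ≤ r + d`. -/
def HasEndpointDiam (G : SimpleGraph X) (x : X) (W : Submodule ℂ (X → ℂ))
    (r d : ℕ) : Prop :=
  ∀ i : ℤ, Emap G x i W ≠ ⊥ ↔ ((r : ℤ) ≤ i ∧ i ≤ (r : ℤ) + (d : ℤ))

/-- `σ` restricts to an isomorphism of `Q`-modules from `U` to `W`. -/
def IsQIso (G : SimpleGraph X) [DecidableRel G.Adj] (x : X) (D : ℕ)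
    (U W : Submodule ℂ (X → ℂ)) (σ : (X → ℂ) →ₗ[ℂ] (X → ℂ)) : Prop :=
  U.map σ = W ∧ (∀ u ∈ U, σ u = 0 → u = 0) ∧
    ∀ S ∈ Qalg G x D, ∀ u ∈ U, σ (S.mulVec u) = S.mulVec (σ u)

/-- `σ` restricts to an isomorphism of `T`-modules from `U` to `W`. -/
def IsTIso (G : SimpleGraph X) [DecidableRel G.Adj] (x : X) (D : ℕ)
    (U W : Submodule ℂ (X → ℂ)) (σ : (X → ℂ) →ₗ[ℂ] (X → ℂ)) : Prop :=
  U.map σ = W ∧ (∀ u ∈ U, σ u = 0 → u = 0) ∧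
    ∀ S ∈ Talg G x D, ∀ u ∈ U, σ (S.mulVec u) = S.mulVec (σ u)

/-- `σ` restricts to a quasi-isomorphism of `T`-modules from `U` to `W`,
with endpoint shift `n`. -/
def IsQuasiIso (G : SimpleGraph X) [DecidableRel G.Adj] (x : X) (D : ℕ)
    (U W : Submodule ℂ (X → ℂ)) (σ : (X → ℂ) →ₗ[ℂ] (X → ℂ)) (n : ℤ) : Prop :=
  U.map σ = W ∧ (∀ u ∈ U, σ u = 0 → u = 0) ∧
    (∀ u ∈ U, σ ((lowerM G x D).mulVec u) = (lowerM G x D).mulVec (σ u)) ∧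
    (∀ u ∈ U, σ ((flatM G x D).mulVec u) = (flatM G x D).mulVec (σ u)) ∧
    (∀ u ∈ U, σ ((raiseM G x D).mulVec u) = (raiseM G x D).mulVec (σ u)) ∧
    ∀ i : ℤ, ∀ u ∈ U, σ ((Estar G x i).mulVec u) = (Estar G x (i + n)).mulVec (σ u)

end

noncomputable section Aux

variable {X : Type*} [Fintype X] [DecidableEq X]

lemma Estar_mul_Estar (G : SimpleGraph X) (x : X) (i j : ℤ) :
    Estar G x i * Estar G x j = if i = j then Estar G x i else 0 := by
  unfold Estar
  rw [Matrix.diagonal_mul_diagonal]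
  split_ifs with h
  · subst h
    ext y z
    rw [Matrix.diagonal_apply, Matrix.diagonal_apply]
    split_ifs <;> simp_all
  · ext y z
    rw [Matrix.diagonal_apply, Matrix.zero_apply]
    split_ifs <;> simp_all

lemma Estar_sandwich_apply (G : SimpleGraph X) (x : X) (i j : ℤ) (S : Matrix X X ℂ)
    (y z : X) :
    (Estar G x i * S * Estar G x j) y z =
      (if (G.dist x y : ℤ) = i then 1 else 0) * S y z *
        (if (G.dist x z : ℤ) = j then 1 else 0) := by
  unfold Estar
  rw [Matrix.mul_diagonal, Matrix.diagonal_mul]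

lemma Estar_zero (G : SimpleGraph X) (x : X) (D : ℕ) (hD : ∀ y, G.dist x y ≤ D)
    (j : ℤ) (h : ¬(0 ≤ j ∧ j ≤ (D : ℤ))) : Estar G x j = 0 := by
  unfold Estar
  ext y z
  rw [Matrix.diagonal_apply, Matrix.zero_apply]
  split_ifs with h1 h2
  · exfalso; have := hD y; omega
  · rfl
  · rfl

lemma Estar_mem_Talg (G : SimpleGraph X) [DecidableRel G.Adj] (x : X) (D : ℕ)
    (hD : ∀ y, G.dist x y ≤ D) (j : ℤ) : Estar G x j ∈ Talg G x D := by
  by_cases h : 0 ≤ j ∧ j ≤ (D : ℤ)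
  · exact Algebra.subset_adjoin (Set.mem_insert_iff.2 (Or.inr ⟨j, ⟨h.1, h.2⟩, rfl⟩))
  · rw [Estar_zero G x D hD j h]
    exact zero_mem _

lemma Estar_sum (G : SimpleGraph X) (x : X) (D : ℕ) (hD : ∀ y, G.dist x y ≤ D) :
    ∑ i ∈ Finset.range (D + 1), Estar G x (i : ℤ) = 1 := by
  ext y z
  by_cases hyz : y = z
  · subst hyz
    simp only [Matrix.sum_apply, Estar, Matrix.diagonal_apply_eq, Matrix.one_apply_eq,
      Nat.cast_inj]
    rw [Finset.sum_ite_eq (Finset.range (D + 1)) (G.dist x y) (fun _ => (1 : ℂ)),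
      if_pos (Finset.mem_range.2 (Nat.lt_succ_of_le (hD y)))]
  · simp [Matrix.sum_apply, Estar, Matrix.diagonal_apply_ne _ hyz, Matrix.one_apply_ne hyz]

/-- Matrices supported on pairs with distance difference `n`. -/
def suppMod (G : SimpleGraph X) (x : X) (n : ℤ) : Submodule ℂ (Matrix X X ℂ) where
  carrier := {M | ∀ y z, M y z ≠ 0 → (G.dist x y : ℤ) = (G.dist x z : ℤ) + n}
  add_mem' := by
    intro M N hM hN y z h
    by_cases h1 : M y z = 0
    · exact hN y z (by simpa [Matrix.add_apply, h1] using h)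
    · exact hM y z h1
  zero_mem' := by intro y z h; simp at h
  smul_mem' := by
    intro c M hM y z h
    refine hM y z ?_
    intro h0
    simp [Matrix.smul_apply, h0] at h

/-- Matrices vanishing on pairs with distance difference `n`. -/
def vanMod (G : SimpleGraph X) (x : X) (n : ℤ) : Submodule ℂ (Matrix X X ℂ) where
  carrier := {M | ∀ y z, (G.dist x y : ℤ) = (G.dist x z : ℤ) + n → M y z = 0}
  add_mem' := by
    intro M N hM hN y z h
    simp [Matrix.add_apply, hM y z h, hN y z h]
  zero_mem' := by intro y z _; simp
  smul_mem' := by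
    intro c M hM y z h
    simp [Matrix.smul_apply, hM y z h]

lemma Tgraded_le_suppMod (G : SimpleGraph X) [DecidableRel G.Adj] (x : X) (D : ℕ)
    (n : ℤ) : Tgraded G x D n ≤ suppMod G x n := by
  rw [Tgraded, Submodule.span_le]
  rintro M ⟨i, S, _, rfl⟩
  intro y z h
  rw [Estar_sandwich_apply] at h
  by_cases h1 : (G.dist x y : ℤ) = i + n
  · by_cases h2 : (G.dist x z : ℤ) = i
    · omega
    · simp [h2] at h
  · simp [h1] at h

lemma suppMod_indep (G : SimpleGraph X) (x : X) : iSupIndep (suppMod G x) := by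
  intro n
  rw [disjoint_iff_inf_le]
  have hle : (⨆ m, ⨆ (_ : m ≠ n), suppMod G x m) ≤ vanMod G x n := by
    refine iSup_le fun m => iSup_le fun hm => ?_
    intro M hM y z hyz
    by_contra h0
    have := hM y z h0
    omega
  intro M hM
  have h1 : M ∈ suppMod G x n := hM.1
  have h2 : M ∈ vanMod G x n := hle hM.2
  ext y z
  simp only [Matrix.zero_apply]
  by_contra h0
  exact h0 (h2 y z (h1 y z h0))

end Aux

theorem stmt8 {X : Type*} [Fintype X] [DecidableEq X]
    (G : SimpleGraph X) [DecidableRel G.Adj] (hG : G.Connected) (x : X) (D : ℕ)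
    (hD : ∀ y, G.dist x y ≤ D) (hD2 : ∃ y, G.dist x y = D) :
    (⨆ n : ℤ, Tgraded G x D n) = Subalgebra.toSubmodule (Talg G x D) ∧
    iSupIndep (Tgraded G x D) ∧
    ∀ n m : ℤ, Tgraded G x D n * Tgraded G x D m ≤ Tgraded G x D (n + m) := by
  refine ⟨?_, ?_, ?_⟩
  · apply le_antisymm
    · refine iSup_le fun n => ?_
      rw [Tgraded, Submodule.span_le]
      rintro M ⟨i, S, hS, rfl⟩
      rw [SetLike.mem_coe, Subalgebra.mem_toSubmodule]
      exact mul_mem (mul_mem (Estar_mem_Talg G x D hD _) hS) (Estar_mem_Talg G x D hD _)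
    · intro S hS
      rw [Subalgebra.mem_toSubmodule] at hS
      have hrep : S = ∑ i ∈ Finset.range (D + 1), ∑ j ∈ Finset.range (D + 1),
          Estar G x i * S * Estar G x j := by
        have h1 : (∑ i ∈ Finset.range (D + 1), Estar G x (i : ℤ)) * S *
            (∑ j ∈ Finset.range (D + 1), Estar G x (j : ℤ)) =
            ∑ i ∈ Finset.range (D + 1), ∑ j ∈ Finset.range (D + 1),
              Estar G x i * S * Estar G x j := by
          rw [Finset.sum_mul, Finset.sum_mul]
          exact Finset.sum_congr rfl fun i _ => Finset.mul_sum _ _ _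
        rw [← h1, Estar_sum G x D hD, one_mul, mul_one]
      rw [hrep]
      refine Submodule.sum_mem _ fun i _ => Submodule.sum_mem _ fun j _ => ?_
      have hmem : Estar G x i * S * Estar G x j ∈ Tgraded G x D ((i : ℤ) - (j : ℤ)) := by
        apply Submodule.subset_span
        exact ⟨(j : ℤ), S, hS, by rw [show (j : ℤ) + ((i : ℤ) - (j : ℤ)) = (i : ℤ) by ring]⟩
      exact (le_iSup (Tgraded G x D) ((i : ℤ) - (j : ℤ))) hmem
  · exact (suppMod_indep G x).mono (Tgraded_le_suppMod G x D)
  · intro n m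
    rw [Tgraded, Tgraded, Submodule.span_mul_span, Submodule.span_le]
    rintro _ ⟨a, ⟨i, S, hS, rfl⟩, b, ⟨j, S', hS', rfl⟩, rfl⟩
    show Estar G x (i + n) * S * Estar G x i * (Estar G x (j + m) * S' * Estar G x j) ∈
      Tgraded G x D (n + m)
    have key : Estar G x (i + n) * S * Estar G x i * (Estar G x (j + m) * S' * Estar G x j)
        = Estar G x (i + n) * S * (Estar G x i * Estar G x (j + m)) * S' * Estar G x j := by
      simp only [mul_assoc]
    rw [key, Estar_mul_Estar]
    by_cases hij : i = j + m
    · rw [if_pos hij]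
      apply Submodule.subset_span
      refine ⟨j, S * Estar G x i * S', mul_mem (mul_mem hS (Estar_mem_Talg G x D hD i)) hS', ?_⟩
      rw [show j + (n + m) = i + n by omega]
      simp only [mul_assoc]
    · rw [if_neg hij]
      simp only [Matrix.mul_zero, Matrix.zero_mul]
      exact zero_mem _
end

section
/- Let W be an irreducible T-module and let v ∈ W be a nonzero common eigenvector for the dual adjacency algebra M*. Then W = Q·v. -/
open Matrix BigOperators

noncomputable section Aux

open Finset

variable {X : Type*} [Fintype X] [DecidableEq X]
variable (G : SimpleGraph X) [DecidableRel G.Adj] (x : X) (D : ℕ)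

lemma EE (i j : ℤ) : Estar G x i * Estar G x j = if i = j then Estar G x i else 0 := by
  unfold Estar
  rw [Matrix.diagonal_mul_diagonal]
  split_ifs with h
  · subst h
    have : (fun y => (if (G.dist x y : ℤ) = i then (1:ℂ) else 0) *
        (if (G.dist x y : ℤ) = i then 1 else 0)) =
        fun y => if (G.dist x y : ℤ) = i then (1:ℂ) else 0 := by
      funext y
      split_ifs <;> simp
    rw [this]
  · have : (fun y => (if (G.dist x y : ℤ) = i then (1:ℂ) else 0) *
        (if (G.dist x y : ℤ) = j then 1 else 0)) = fun _ => (0:ℂ) := by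
      funext y
      split_ifs with h1 h2 <;> simp_all
    rw [this, Matrix.diagonal_zero]

lemma Eabsorb (a : ℤ) (M : Matrix X X ℂ) :
    Estar G x a * (Estar G x a * M) = Estar G x a * M := by
  rw [← mul_assoc, EE, if_pos rfl]

lemma Esum (hD : ∀ y, G.dist x y ≤ D) :
    ∑ i ∈ Finset.range (D + 1), Estar G x i = 1 := by
  ext y z
  rw [Matrix.sum_apply]
  by_cases h : y = z
  · subst h
    rw [Matrix.one_apply_eq]
    have hcg : ∀ i ∈ Finset.range (D+1), (Estar G x i) y y
        = if G.dist x y = i then (1:ℂ) else 0 := by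
      intro i _
      rw [Estar, Matrix.diagonal_apply_eq]
      norm_num
    rw [Finset.sum_congr rfl hcg, Finset.sum_ite_eq]
    exact if_pos (Finset.mem_range.2 (by have := hD y; omega))
  · rw [Matrix.one_apply_ne h]
    refine Finset.sum_eq_zero fun i _ => ?_
    rw [Estar, Matrix.diagonal_apply_ne _ h]

lemma sum_proj (s : Finset ℕ) (f : ℕ → ℤ) (a b : ℤ) (c : ℂ) :
    (∑ i ∈ s, (if a = f i then (1:ℂ) else 0) * c * (if b = (i:ℤ) then 1 else 0)) =
      if ∃ i ∈ s, b = (i:ℤ) ∧ a = f i then c else 0 := by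
  by_cases hb : ∃ i ∈ s, b = (i:ℤ) ∧ a = f i
  · obtain ⟨i0, hi0, hb0, ha0⟩ := hb
    rw [if_pos ⟨i0, hi0, hb0, ha0⟩, Finset.sum_eq_single i0]
    · rw [if_pos ha0, if_pos hb0, one_mul, mul_one]
    · intro j _ hne
      have hz : (if b = (j:ℤ) then (1:ℂ) else 0) = 0 := by
        rw [if_neg]
        intro hbj
        omega
      rw [hz, mul_zero]
    · intro h; exact absurd hi0 h
  · rw [if_neg hb]
    apply Finset.sum_eq_zero
    intro i hi
    by_cases h1 : b = (i:ℤ)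
    · by_cases h2 : a = f i
      · exact absurd ⟨i, hi, h1, h2⟩ hb
      · rw [if_neg h2, zero_mul, zero_mul]
    · rw [if_neg h1, mul_zero]

lemma triple_apply (a b : ℤ) (M : Matrix X X ℂ) (y z : X) :
    (Estar G x a * M * Estar G x b) y z =
      (if (G.dist x y : ℤ) = a then 1 else 0) * M y z *
        (if (G.dist x z : ℤ) = b then 1 else 0) := by
  rw [Estar, Estar, Matrix.mul_diagonal, Matrix.diagonal_mul]

lemma A_split (hG : G.Connected) (hD : ∀ y, G.dist x y ≤ D) :
    adjMat G = lowerM G x D + flatM G x D + raiseM G x D := by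
  ext y z
  simp only [Matrix.add_apply, lowerM, flatM, raiseM, Matrix.sum_apply, triple_apply]
  rw [sum_proj, sum_proj, sum_proj]
  by_cases hadj : G.Adj y z
  · have hc : adjMat G y z = 1 := by simp [adjMat, hadj]
    have hz := hD z
    have hy := hD y
    have hd1 : G.dist x z ≤ G.dist x y + 1 := by
      have := hG.dist_triangle (u := x) (v := y) (w := z)
      rwa [SimpleGraph.dist_eq_one_iff_adj.2 hadj] at this
    have hd2 : G.dist x y ≤ G.dist x z + 1 := by
      have := hG.dist_triangle (u := x) (v := z) (w := y)
      rwa [SimpleGraph.dist_eq_one_iff_adj.2 hadj.symm] at this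
    have e1 : (∃ i ∈ Finset.Icc 1 D, (G.dist x z : ℤ) = (i:ℤ) ∧
        (G.dist x y : ℤ) = (i:ℤ) - 1) ↔ (G.dist x y : ℤ) = (G.dist x z : ℤ) - 1 := by
      constructor
      · rintro ⟨i, _, h1, h2⟩; omega
      · intro h
        exact ⟨G.dist x z, Finset.mem_Icc.2 ⟨by omega, hz⟩, rfl, by omega⟩
    have e2 : (∃ i ∈ Finset.range (D+1), (G.dist x z : ℤ) = (i:ℤ) ∧
        (G.dist x y : ℤ) = (i:ℤ)) ↔ (G.dist x y : ℤ) = (G.dist x z : ℤ) := by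
      constructor
      · rintro ⟨i, _, h1, h2⟩; omega
      · intro h
        exact ⟨G.dist x z, Finset.mem_range.2 (by omega), rfl, by omega⟩
    have e3 : (∃ i ∈ Finset.range D, (G.dist x z : ℤ) = (i:ℤ) ∧
        (G.dist x y : ℤ) = (i:ℤ) + 1) ↔ (G.dist x y : ℤ) = (G.dist x z : ℤ) + 1 := by
      constructor
      · rintro ⟨i, _, h1, h2⟩; omega
      · intro h
        exact ⟨G.dist x z, Finset.mem_range.2 (by omega), rfl, by omega⟩
    simp only [e1, e2, e3, hc]
    have tri : (G.dist x y : ℤ) = (G.dist x z : ℤ) - 1 ∨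
        (G.dist x y : ℤ) = (G.dist x z : ℤ) ∨
        (G.dist x y : ℤ) = (G.dist x z : ℤ) + 1 := by omega
    rcases tri with h | h | h
    · rw [if_pos h, if_neg (by omega), if_neg (by omega), add_zero, add_zero]
    · rw [if_neg (by omega), if_pos h, if_neg (by omega), zero_add, add_zero]
    · rw [if_neg (by omega), if_neg (by omega), if_pos h, zero_add, zero_add]
  · have hc : adjMat G y z = 0 := by simp [adjMat, hadj]
    rw [hc]
    split_ifs <;> simp

lemma shiftE_gen (s : Finset ℕ) (n : ℤ) (i : ℤ) :
    (∑ j ∈ s, Estar G x ((j:ℤ) + n) * adjMat G * Estar G x j) * Estar G x i =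
      Estar G x (i + n) *
        ((∑ j ∈ s, Estar G x ((j:ℤ) + n) * adjMat G * Estar G x j) * Estar G x i) := by
  rw [Finset.sum_mul, Finset.mul_sum]
  refine Finset.sum_congr rfl fun j _ => ?_
  rw [mul_assoc (Estar G x ((j:ℤ) + n) * adjMat G), EE]
  by_cases h : (j:ℤ) = i
  · rw [if_pos h, h]
    rw [show (Estar G x (i + n) * adjMat G) * Estar G x i
        = Estar G x (i + n) * (adjMat G * Estar G x i) from mul_assoc _ _ _, Eabsorb]
  · rw [if_neg h, mul_zero, mul_zero]

lemma lowerM_eq : lowerM G x D =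
    ∑ j ∈ Finset.Icc 1 D, Estar G x ((j:ℤ) + (-1)) * adjMat G * Estar G x j := by
  unfold lowerM
  refine Finset.sum_congr rfl fun j _ => ?_
  norm_num [sub_eq_add_neg]

lemma flatM_eq : flatM G x D =
    ∑ j ∈ Finset.range (D+1), Estar G x ((j:ℤ) + 0) * adjMat G * Estar G x j := by
  unfold flatM
  refine Finset.sum_congr rfl fun j _ => ?_
  norm_num

lemma lowerE (i : ℤ) : lowerM G x D * Estar G x i
    = Estar G x (i + (-1)) * (lowerM G x D * Estar G x i) := by
  rw [lowerM_eq]; exact shiftE_gen G x _ _ i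

lemma flatE (i : ℤ) : flatM G x D * Estar G x i
    = Estar G x (i + 0) * (flatM G x D * Estar G x i) := by
  rw [flatM_eq]; exact shiftE_gen G x _ _ i

lemma raiseE (i : ℤ) : raiseM G x D * Estar G x i
    = Estar G x (i + 1) * (raiseM G x D * Estar G x i) := by
  unfold raiseM; exact shiftE_gen G x _ _ i

/-- matrices shifting the grading by `n`. -/
def gKer (n : ℤ) : Submodule ℂ (Matrix X X ℂ) where
  carrier := {M | ∀ i : ℤ, M * Estar G x i = Estar G x (i + n) * (M * Estar G x i)}
  add_mem' := by
    intro a b ha hb i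
    rw [add_mul, mul_add, ← ha i, ← hb i]
  zero_mem' := by intro i; simp
  smul_mem' := by
    intro c a ha i
    rw [smul_mul_assoc, Matrix.mul_smul, ← ha i]

def Qpiece (n : ℤ) : Submodule ℂ (Matrix X X ℂ) :=
  Subalgebra.toSubmodule (Qalg G x D) ⊓ gKer G x n

lemma Q_le_sup : ∀ S ∈ Qalg G x D, S ∈ ⨆ n : ℤ, Qpiece G x D n := by
  intro S hS
  induction hS using Algebra.adjoin_induction with
  | mem s hs =>
    rcases hs with rfl | rfl | rfl
    · exact Submodule.mem_iSup_of_mem (-1)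
        ⟨Algebra.subset_adjoin (by simp), fun i => lowerE G x D i⟩
    · exact Submodule.mem_iSup_of_mem 0
        ⟨Algebra.subset_adjoin (by simp), fun i => flatE G x D i⟩
    · exact Submodule.mem_iSup_of_mem 1
        ⟨Algebra.subset_adjoin (by simp), fun i => raiseE G x D i⟩
  | algebraMap r =>
    refine Submodule.mem_iSup_of_mem 0 ⟨Subalgebra.algebraMap_mem _ r, fun i => ?_⟩
    rw [Algebra.algebraMap_eq_smul_one, smul_mul_assoc, one_mul, Matrix.mul_smul,
      add_zero, EE, if_pos rfl]
  | add a b _ _ iha ihb => exact add_mem iha ihb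
  | mul a b _ _ iha ihb =>
    refine Submodule.iSup_induction _ (motive := fun a => a * b ∈ ⨆ n : ℤ, Qpiece G x D n) iha
      ?_ (by rw [zero_mul]; exact zero_mem _)
      (fun y z hy hz => by rw [add_mul]; exact add_mem hy hz)
    intro m a ha
    refine Submodule.iSup_induction _ (motive := fun b => a * b ∈ ⨆ n : ℤ, Qpiece G x D n) ihb
      ?_ (by rw [mul_zero]; exact zero_mem _)
      (fun y z hy hz => by rw [mul_add]; exact add_mem hy hz)
    intro n b hb
    obtain ⟨ha1, ha2⟩ := Submodule.mem_inf.1 ha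
    obtain ⟨hb1, hb2⟩ := Submodule.mem_inf.1 hb
    have ha2' : ∀ i : ℤ, a * Estar G x i = Estar G x (i + m) * (a * Estar G x i) := ha2
    have hb2' : ∀ i : ℤ, b * Estar G x i = Estar G x (i + n) * (b * Estar G x i) := hb2
    refine Submodule.mem_iSup_of_mem (m + n) (Submodule.mem_inf.2 ⟨?_, ?_⟩)
    · exact (Subalgebra.mem_toSubmodule _).2
        (mul_mem ((Subalgebra.mem_toSubmodule _).1 ha1) ((Subalgebra.mem_toSubmodule _).1 hb1))
    · intro i
      have hb' := hb2' i
      have ha' := ha2' (i + n)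
      calc a * b * Estar G x i
          = a * (b * Estar G x i) := mul_assoc _ _ _
        _ = a * (Estar G x (i+n) * (b * Estar G x i)) := by rw [← hb']
        _ = (a * Estar G x (i+n)) * (b * Estar G x i) := (mul_assoc _ _ _).symm
        _ = (Estar G x (i+n+m) * (a * Estar G x (i+n))) * (b * Estar G x i) := by rw [← ha']
        _ = Estar G x (i+n+m) * ((a * Estar G x (i+n)) * (b * Estar G x i)) := mul_assoc _ _ _
        _ = Estar G x (i+n+m) * (a * (Estar G x (i+n) * (b * Estar G x i))) :=
            congrArg _ (mul_assoc _ _ _)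
        _ = Estar G x (i+n+m) * (a * (b * Estar G x i)) := by rw [← hb']
        _ = Estar G x (i+n+m) * (a * b * Estar G x i) := congrArg _ (mul_assoc _ _ _).symm
        _ = Estar G x (i+(m+n)) * (a * b * Estar G x i) := by
            rw [show i+n+m = i+(m+n) by ring]

end Aux


theorem stmt12 {X : Type*} [Fintype X] [DecidableEq X]
    (G : SimpleGraph X) [DecidableRel G.Adj] (hG : G.Connected) (x : X) (D : ℕ)
    (hD : ∀ y, G.dist x y ≤ D) (hD2 : ∃ y, G.dist x y = D)
    (W : Submodule ℂ (X → ℂ)) (hW : IsIrredMod (Talg G x D) W)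
    (v : X → ℂ) (hv : v ∈ W) (hv0 : v ≠ 0)
    (heig : ∀ S ∈ Mstar G x D, ∃ c : ℂ, Matrix.mulVec S v = c • v) :
    W = Submodule.span ℂ {w | ∃ S ∈ Qalg G x D, w = Matrix.mulVec S v} := by
  obtain ⟨hWinv, hWne, hWirr⟩ := hW
  set Qv := Submodule.span ℂ {w | ∃ S ∈ Qalg G x D, w = Matrix.mulVec S v} with hQvdef
  have hvQ : v ∈ Qv := Submodule.subset_span ⟨1, one_mem _, by rw [Matrix.one_mulVec]⟩
  -- Q is contained in T
  have QsubT : ∀ S ∈ Qalg G x D, S ∈ Talg G x D := by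
    have hA : adjMat G ∈ Talg G x D := Algebra.subset_adjoin (Set.mem_insert _ _)
    have hE : ∀ i : ℤ, 0 ≤ i → i ≤ (D:ℤ) → Estar G x i ∈ Talg G x D := fun i h1 h2 =>
      Algebra.subset_adjoin (Set.mem_insert_of_mem _ ⟨i, Set.mem_Icc.2 ⟨h1, h2⟩, rfl⟩)
    have hL : lowerM G x D ∈ Talg G x D := by
      refine Subalgebra.sum_mem _ fun i hi => ?_
      rw [Finset.mem_Icc] at hi
      exact mul_mem (mul_mem (hE _ (by omega) (by omega)) hA) (hE _ (by omega) (by omega))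
    have hF : flatM G x D ∈ Talg G x D := by
      refine Subalgebra.sum_mem _ fun i hi => ?_
      rw [Finset.mem_range] at hi
      exact mul_mem (mul_mem (hE _ (by omega) (by omega)) hA) (hE _ (by omega) (by omega))
    have hR : raiseM G x D ∈ Talg G x D := by
      refine Subalgebra.sum_mem _ fun i hi => ?_
      rw [Finset.mem_range] at hi
      exact mul_mem (mul_mem (hE _ (by omega) (by omega)) hA) (hE _ (by omega) (by omega))
    intro S hS
    refine Algebra.adjoin_le ?_ hS
    rintro s hs
    simp only [Set.mem_insert_iff, Set.mem_singleton_iff] at hs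
    rcases hs with rfl | rfl | rfl
    exacts [hL, hF, hR]
  -- there is r with E_r v = v
  obtain ⟨r, hr⟩ : ∃ r : ℕ, (Estar G x r).mulVec v = v := by
    have hc : ∀ i : ℕ, ∃ c : ℂ, (Estar G x i).mulVec v = c • v := by
      intro i
      by_cases hi : i ≤ D
      · exact heig _ (Submodule.subset_span ⟨(i:ℤ), Set.mem_Icc.2 ⟨by omega, by omega⟩, rfl⟩)
      · refine ⟨0, ?_⟩
        have h0 : Estar G x i = 0 := by
          unfold Estar
          have : (fun y => if (G.dist x y : ℤ) = (i:ℤ) then (1:ℂ) else 0) = fun _ => (0:ℂ) := by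
            funext y
            rw [if_neg]
            have := hD y
            omega
          rw [this, Matrix.diagonal_zero]
        rw [h0, Matrix.zero_mulVec, zero_smul]
    choose c hc using hc
    have hsum : (∑ i ∈ Finset.range (D+1), c i) • v = v := by
      have h2 : (∑ i ∈ Finset.range (D+1), Estar G x (i:ℤ)).mulVec v
          = ∑ i ∈ Finset.range (D+1), (Estar G x (i:ℤ)).mulVec v := by
        induction Finset.range (D+1) using Finset.induction_on with
        | empty => simp
        | insert _ _ h ih =>
          rw [Finset.sum_insert h, Finset.sum_insert h, Matrix.add_mulVec, ih]
      rw [Finset.sum_smul]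
      have h3 : ∀ i ∈ Finset.range (D+1), c i • v = (Estar G x (i:ℤ)).mulVec v :=
        fun i _ => (hc i).symm
      rw [Finset.sum_congr rfl h3, ← h2, Esum G x D hD, Matrix.one_mulVec]
    have hex : ∃ i ∈ Finset.range (D+1), c i ≠ 0 := by
      by_contra hcon
      push_neg at hcon
      rw [Finset.sum_eq_zero hcon, zero_smul] at hsum
      exact hv0 hsum.symm
    obtain ⟨r, _, hcr⟩ := hex
    refine ⟨r, ?_⟩
    have hid : (Estar G x r).mulVec ((Estar G x r).mulVec v) = (Estar G x r).mulVec v := by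
      rw [Matrix.mulVec_mulVec, EE, if_pos rfl]
    rw [hc r, Matrix.mulVec_smul, hc r, smul_smul] at hid
    have heq : c r * c r = c r := smul_left_injective ℂ hv0 hid
    have h0 : c r * (c r - 1) = 0 := by linear_combination heq
    have hc1 : c r = 1 := by
      rcases mul_eq_zero.1 h0 with h | h
      · exact absurd h hcr
      · exact sub_eq_zero.1 h
    rw [hc r, hc1, one_smul]
  -- Qv is contained in W
  have hQvW : Qv ≤ W := by
    rw [hQvdef]
    refine Submodule.span_le.2 ?_
    rintro w ⟨S, hS, rfl⟩
    exact hWinv S (QsubT S hS) v hv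
  -- Qv is Q-invariant
  have hQinv : ∀ S ∈ Qalg G x D, ∀ w ∈ Qv, S.mulVec w ∈ Qv := by
    intro S hS w hw
    induction hw using Submodule.span_induction with
    | mem w hw =>
      obtain ⟨S2, hS2, rfl⟩ := hw
      rw [Matrix.mulVec_mulVec]
      exact Submodule.subset_span ⟨S * S2, mul_mem hS hS2, rfl⟩
    | zero => rw [Matrix.mulVec_zero]; exact zero_mem _
    | add a b ha hb iha ihb => rw [Matrix.mulVec_add]; exact add_mem iha ihb
    | smul t a ha iha => rw [Matrix.mulVec_smul]; exact Submodule.smul_mem _ _ iha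
  -- Qv is Estar-invariant
  have hEinv : ∀ j : ℤ, ∀ w ∈ Qv, (Estar G x j).mulVec w ∈ Qv := by
    intro j w hw
    induction hw using Submodule.span_induction with
    | mem w hw =>
      obtain ⟨S, hS, rfl⟩ := hw
      have hsup := Q_le_sup G x D S hS
      refine Submodule.iSup_induction _
        (motive := fun S => (Estar G x j).mulVec (S.mulVec v) ∈ Qv) hsup ?_ ?_ ?_
      · intro n M hM
        obtain ⟨hM1, hM2⟩ := Submodule.mem_inf.1 hM
        have hM2' : ∀ i : ℤ, M * Estar G x i = Estar G x (i + n) * (M * Estar G x i) := hM2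
        have h1 : M.mulVec v = (M * Estar G x r).mulVec v := by
          rw [← Matrix.mulVec_mulVec, hr]
        rw [h1, Matrix.mulVec_mulVec]
        have h2 : Estar G x j * (M * Estar G x r)
            = if j = (r:ℤ) + n then M * Estar G x r else 0 := by
          conv_lhs => rw [hM2' r, ← mul_assoc, EE]
          split_ifs with h
          · rw [h, ← hM2' r]
          · rw [zero_mul]
        rw [h2]
        split_ifs with h
        · rw [← Matrix.mulVec_mulVec, hr]
          exact Submodule.subset_span ⟨M, hM1, rfl⟩
        · rw [Matrix.zero_mulVec]
          exact zero_mem _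
      · rw [Matrix.zero_mulVec, Matrix.mulVec_zero]
        exact zero_mem _
      · intro a b ha hb
        rw [Matrix.add_mulVec, Matrix.mulVec_add]
        exact add_mem ha hb
    | zero => rw [Matrix.mulVec_zero]; exact zero_mem _
    | add a b ha hb iha ihb => rw [Matrix.mulVec_add]; exact add_mem iha ihb
    | smul t a ha iha => rw [Matrix.mulVec_smul]; exact Submodule.smul_mem _ _ iha
  -- Qv is T-invariant
  have hTinv : ∀ S ∈ Talg G x D, ∀ w ∈ Qv, S.mulVec w ∈ Qv := by
    intro S hS
    induction hS using Algebra.adjoin_induction with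
    | mem s hs =>
      rcases hs with rfl | ⟨i, _, rfl⟩
      · intro w hw
        rw [A_split G x D hG hD, Matrix.add_mulVec, Matrix.add_mulVec]
        refine add_mem (add_mem ?_ ?_) ?_ <;>
          exact hQinv _ (Algebra.subset_adjoin (by simp)) w hw
      · exact fun w hw => hEinv i w hw
    | algebraMap t =>
      intro w hw
      rw [Algebra.algebraMap_eq_smul_one, Matrix.smul_mulVec, Matrix.one_mulVec]
      exact Submodule.smul_mem _ _ hw
    | add a b ha hb iha ihb =>
      intro w hw
      rw [Matrix.add_mulVec]
      exact add_mem (iha w hw) (ihb w hw)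
    | mul a b ha hb iha ihb =>
      intro w hw
      rw [← Matrix.mulVec_mulVec]
      exact iha _ (ihb w hw)
  rcases hWirr Qv hQvW hTinv with h | h
  · rw [h] at hvQ
    exact absurd (Submodule.mem_bot ℂ |>.1 hvQ) hv0
  · exact h.symm
end
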